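/- For every k ∈ ℕ, the graph G formed from two disjoint copies G1, G2, each a disjoint union of two cliques K_{6k+3}, together with the complete bipartite graph between V(G1) and V(G2), is K3-divisible, has 24k+12 vertices, minimum degree 18k+8 = 3|G|/4 − 1, and has no K3-decomposition. -/

import Mathlib

/-- A K3-decomposition of `G`. -/
def IsTriangleDecomp {V : Type*} (G : SimpleGraph V) (T : Finset (Finset V)) : Prop :=
  (∀ t ∈ T, t.card = 3 ∧ ∀ x ∈ t, ∀ y ∈ t, x ≠ y → G.Adj x y) ∧
  (∀ x y, G.Adj x y → ∃! t, t ∈ T ∧ x ∈ t ∧ y ∈ t)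

/-- The extremal example for the Nash-Williams conjecture: vertices are
`(s, c, i)` where `s` indicates the side (`G1` or `G2`), `c` indicates which
clique of size `6k+3` within that side, and `i` is the index within the clique.
Two distinct vertices are adjacent iff they are on different sides (the complete
bipartite graph between `V(G1)` and `V(G2)`), or on the same side and in the
same clique. -/
def exG (k : ℕ) : SimpleGraph (Fin 2 × Fin 2 × Fin (6 * k + 3)) where
  Adj v w := v ≠ w ∧ (v.1 ≠ w.1 ∨ v.2.1 = w.2.1)
  symm := by
    constructor
    intro v w h
    exact ⟨fun e => h.1 e.symm, by tauto⟩
  loopless := by constructor; intro v h; exact h.1 rfl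

instance (k : ℕ) : DecidableRel (exG k).Adj :=
  fun v w => inferInstanceAs (Decidable (v ≠ w ∧ (v.1 ≠ w.1 ∨ v.2.1 = w.2.1)))

open Finset

abbrev Vk (k : ℕ) := Fin 2 × Fin 2 × Fin (6 * k + 3)

lemma adj_iff {k : ℕ} (v w : Vk k) :
    (exG k).Adj v w ↔ v ≠ w ∧ (v.1 ≠ w.1 ∨ v.2.1 = w.2.1) := Iff.rfl

lemma fin2_ne : ∀ a b : Fin 2, a ≠ b → a = 1 - b := by decide
lemma fin2_one : ∀ a : Fin 2, a ≠ 0 → a = 1 := by decide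
lemma fin2_sub_ne : ∀ a : Fin 2, 1 - a ≠ a := by decide

lemma card_side (k : ℕ) (a : Fin 2) :
    ((univ : Finset (Vk k)).filter (fun x => x.1 = a)).card = 12 * k + 6 := by
  have h : ((univ : Finset (Vk k)).filter (fun x => x.1 = a))
      = ({a} : Finset (Fin 2)) ×ˢ (univ : Finset (Fin 2 × Fin (6 * k + 3))) := by
    ext x
    simp only [Finset.mem_filter, Finset.mem_univ, true_and, Finset.mem_product,
      Finset.mem_singleton, and_true]
  rw [h, Finset.card_product]
  simp [Fintype.card_prod]
  omega

lemma card_same_clique (k : ℕ) (a : Vk k) :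
    ((univ : Finset (Vk k)).filter
      (fun b => b ≠ a ∧ b.1 = a.1 ∧ b.2.1 = a.2.1)).card = 6 * k + 2 := by
  have hinj : Function.Injective (fun i : Fin (6 * k + 3) => ((a.1, a.2.1, i) : Vk k)) := by
    intro i j h
    simpa [Prod.ext_iff] using h
  have h : ((univ : Finset (Vk k)).filter (fun b => b ≠ a ∧ b.1 = a.1 ∧ b.2.1 = a.2.1))
      = (((univ : Finset (Fin (6 * k + 3))).image
          (fun i => ((a.1, a.2.1, i) : Vk k))).erase a) := by
    ext b
    simp only [Finset.mem_filter, Finset.mem_univ, true_and, Finset.mem_erase,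
      Finset.mem_image]
    constructor
    · rintro ⟨hne, h1, h2⟩
      exact ⟨hne, b.2.2, by rw [← h1, ← h2]⟩
    · rintro ⟨hne, i, hi⟩
      refine ⟨hne, ?_, ?_⟩ <;> rw [← hi]
  rw [h, Finset.card_erase_of_mem, Finset.card_image_of_injective _ hinj]
  · simp
  · exact Finset.mem_image.mpr ⟨a.2.2, Finset.mem_univ _, rfl⟩

lemma degree_eq (k : ℕ) (v : Vk k) : (exG k).degree v = 18 * k + 8 := by
  classical
  have hnon : ((univ : Finset (Vk k)).filter (fun w => ¬ (exG k).Adj v w)).card = 6 * k + 4 := by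
    have hinj : Function.Injective (fun i : Fin (6 * k + 3) => ((v.1, 1 - v.2.1, i) : Vk k)) := by
      intro i j h
      simpa [Prod.ext_iff] using h
    have h : ((univ : Finset (Vk k)).filter (fun w => ¬ (exG k).Adj v w))
        = insert v ((univ : Finset (Fin (6 * k + 3))).image
            (fun i => ((v.1, 1 - v.2.1, i) : Vk k))) := by
      ext w
      simp only [Finset.mem_filter, Finset.mem_univ, true_and, adj_iff, not_and, not_or,
        Finset.mem_insert, Finset.mem_image]
      constructor
      · intro hw
        by_cases hvw : v = w
        · exact Or.inl hvw.symm
        · obtain ⟨h1, h2⟩ := hw hvw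
          refine Or.inr ⟨w.2.2, ?_⟩
          have h1' : w.1 = v.1 := (not_not.mp h1).symm
          have h2' : w.2.1 = 1 - v.2.1 := fin2_ne _ _ (fun e => h2 e.symm)
          rw [← h1', ← h2']
      · rintro (h | ⟨i, hi⟩)
        · intro hvw; exact absurd h.symm hvw
        · intro _
          constructor
          · rw [← hi]; simp
          · rw [← hi]; simpa using (fin2_sub_ne v.2.1).symm
    rw [h, Finset.card_insert_of_notMem, Finset.card_image_of_injective _ hinj]
    · simp
    · intro hmem
      obtain ⟨i, -, hi⟩ := Finset.mem_image.mp hmem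
      exact fin2_sub_ne v.2.1 (congrArg (fun x : Vk k => x.2.1) hi)
  have hdeg : (exG k).degree v = ((univ : Finset (Vk k)).filter ((exG k).Adj v)).card := by
    rw [← SimpleGraph.neighborFinset_eq_filter]; rfl
  have hcard : (univ : Finset (Vk k)).card = 24 * k + 12 := by
    simp [Fintype.card_prod]
    omega
  have h2 : ((univ : Finset (Vk k)).filter (fun w => ¬ (exG k).Adj v w))
      = univ \ (univ : Finset (Vk k)).filter ((exG k).Adj v) := Finset.filter_not _ _
  rw [h2, Finset.card_sdiff_of_subset (Finset.filter_subset _ _)] at hnon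
  have hle := Finset.card_filter_le (univ : Finset (Vk k)) ((exG k).Adj v)
  omega

lemma card_t' (k : ℕ) :
    ((univ : Finset (Vk k × Vk k)).filter
      (fun p => p.2 ≠ p.1 ∧ p.2.1 = p.1.1 ∧ p.2.2.1 = p.1.2.1)).card
      = (24 * k + 12) * (6 * k + 2) := by
  rw [Finset.card_filter, Fintype.sum_prod_type]
  have h : ∀ a : Vk k,
      (∑ b : Vk k, if (b ≠ a ∧ b.1 = a.1 ∧ b.2.1 = a.2.1) then 1 else 0) = 6 * k + 2 := by
    intro a
    rw [← Finset.card_filter]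
    exact card_same_clique k a
  calc (∑ a : Vk k, ∑ b : Vk k, if (b ≠ a ∧ b.1 = a.1 ∧ b.2.1 = a.2.1) then 1 else 0)
      = ∑ _a : Vk k, (6 * k + 2) := by
        exact Finset.sum_congr rfl (fun a _ => h a)
    _ = (24 * k + 12) * (6 * k + 2) := by
        rw [Finset.sum_const, smul_eq_mul, Finset.card_univ]
        simp [Fintype.card_prod]
        ring

lemma card_s (k : ℕ) :
    ((univ : Finset (Vk k × Vk k)).filter (fun p => p.1.1 = 0 ∧ p.2.1 = 1)).card
      = (12 * k + 6) * (12 * k + 6) := by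
  have h : ((univ : Finset (Vk k × Vk k)).filter (fun p => p.1.1 = 0 ∧ p.2.1 = 1))
      = ((univ : Finset (Vk k)).filter (fun x => x.1 = 0)) ×ˢ
        ((univ : Finset (Vk k)).filter (fun x => x.1 = 1)) := by
    ext ⟨a, b⟩
    simp [Finset.mem_product]
  rw [h, Finset.card_product, card_side, card_side]

lemma no_decomp (k : ℕ) : ¬ ∃ T, IsTriangleDecomp (exG k) T := by
  classical
  rintro ⟨T, htri, huniq⟩
  have uniq2 : ∀ a b : Vk k, (exG k).Adj a b → ∀ t1 ∈ T, a ∈ t1 → b ∈ t1 →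
      ∀ t2 ∈ T, a ∈ t2 → b ∈ t2 → t1 = t2 := by
    intro a b hab t1 h1 ha1 hb1 t2 h2 ha2 hb2
    obtain ⟨t0, -, hun⟩ := huniq a b hab
    rw [hun t1 ⟨h1, ha1, hb1⟩, hun t2 ⟨h2, ha2, hb2⟩]
  have key : ∀ p : Vk k × Vk k, ∃ z : Vk k, p.1.1 = 0 → p.2.1 = 1 →
      (insert p.1 (insert p.2 {z}) ∈ T ∧ z ≠ p.1 ∧ z ≠ p.2 ∧
        (exG k).Adj p.1 z ∧ (exG k).Adj p.2 z) := by
    intro p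
    by_cases h1 : p.1.1 = 0
    swap
    · exact ⟨p.1, fun h => absurd h h1⟩
    by_cases h2 : p.2.1 = 1
    swap
    · exact ⟨p.1, fun _ h => absurd h h2⟩
    have hne : p.1 ≠ p.2 := by
      intro e
      rw [e, h2] at h1
      exact absurd h1 (by decide)
    have hadj : (exG k).Adj p.1 p.2 := ⟨hne, Or.inl (by rw [h1, h2]; decide)⟩
    obtain ⟨t, ⟨htT, hx, hy⟩, -⟩ := huniq _ _ hadj
    obtain ⟨hcard, hall⟩ := htri t htT
    have hy' : p.2 ∈ t.erase p.1 := Finset.mem_erase.mpr ⟨hne.symm, hy⟩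
    have h3 : ((t.erase p.1).erase p.2).card = 1 := by
      rw [Finset.card_erase_of_mem hy', Finset.card_erase_of_mem hx, hcard]
    obtain ⟨z, hz⟩ := Finset.card_eq_one.mp h3
    have hzmem : z ∈ (t.erase p.1).erase p.2 := hz ▸ Finset.mem_singleton_self z
    have hz2 : z ≠ p.2 := (Finset.mem_erase.mp hzmem).1
    have hz1 : z ≠ p.1 := (Finset.mem_erase.mp (Finset.mem_erase.mp hzmem).2).1
    have hzt : z ∈ t := (Finset.mem_erase.mp (Finset.mem_erase.mp hzmem).2).2
    have ht' : t = insert p.1 (insert p.2 {z}) := by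
      rw [← hz, Finset.insert_erase hy', Finset.insert_erase hx]
    exact ⟨z, fun _ _ => ⟨ht' ▸ htT, hz1, hz2,
      hall _ hx _ hzt (Ne.symm hz1), hall _ hy _ hzt (Ne.symm hz2)⟩⟩
  choose z hz using key
  set s : Finset (Vk k × Vk k) :=
    (univ : Finset (Vk k × Vk k)).filter (fun p => p.1.1 = 0 ∧ p.2.1 = 1) with hs
  set t' : Finset (Vk k × Vk k) :=
    (univ : Finset (Vk k × Vk k)).filter
      (fun p => p.2 ≠ p.1 ∧ p.2.1 = p.1.1 ∧ p.2.2.1 = p.1.2.1) with ht'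
  set f : Vk k × Vk k → Vk k × Vk k :=
    fun p => if (z p).1 = 0 then (z p, p.1) else (z p, p.2) with hf
  have hmaps : ∀ p ∈ s, f p ∈ t' := by
    intro p hp
    rw [hs, Finset.mem_filter] at hp
    obtain ⟨-, hp1, hp2⟩ := hp
    obtain ⟨-, hzne1, hzne2, hadj1, hadj2⟩ := hz p hp1 hp2
    rw [ht', Finset.mem_filter]
    by_cases hc : (z p).1 = 0
    · have hfp : f p = (z p, p.1) := if_pos hc
      rw [hfp]
      have hside : p.1.1 = (z p).1 := by rw [hp1, hc]
      have hclique : p.1.2.1 = (z p).2.1 := by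
        rcases hadj1.2 with h | h
        · exact absurd hside (by exact fun e => h e)
        · exact h
      exact ⟨Finset.mem_univ _, hzne1.symm, hside, hclique⟩
    · have hfp : f p = (z p, p.2) := if_neg hc
      rw [hfp]
      have hzc : (z p).1 = 1 := fin2_one _ hc
      have hside : p.2.1 = (z p).1 := by rw [hp2, hzc]
      have hclique : p.2.2.1 = (z p).2.1 := by
        rcases hadj2.2 with h | h
        · exact absurd hside (fun e => h e)
        · exact h
      exact ⟨Finset.mem_univ _, hzne2.symm, hside, hclique⟩
  have hinj : Set.InjOn f s := by
    intro p hp q hq hfpq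
    rw [hs, Finset.coe_filter] at hp hq
    obtain ⟨-, hp1, hp2⟩ := hp
    obtain ⟨-, hq1, hq2⟩ := hq
    obtain ⟨hpT, hpz1, hpz2, hpa1, hpa2⟩ := hz p hp1 hp2
    obtain ⟨hqT, hqz1, hqz2, hqa1, hqa2⟩ := hz q hq1 hq2
    rw [hf] at hfpq
    simp only at hfpq
    by_cases hcp : (z p).1 = 0 <;> by_cases hcq : (z q).1 = 0
    · rw [if_pos hcp, if_pos hcq] at hfpq
      have hzz : z p = z q := (Prod.ext_iff.mp hfpq).1
      have h11 : p.1 = q.1 := (Prod.ext_iff.mp hfpq).2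
      have hteq : ({p.1, p.2, z p} : Finset (Vk k)) = {q.1, q.2, z q} := by
        apply uniq2 p.1 (z p) hpa1 _ hpT (by simp) (by simp) _ hqT
          (by rw [h11]; simp) (by rw [hzz]; simp)
      have hmem : p.2 ∈ ({q.1, q.2, z q} : Finset (Vk k)) := by
        rw [← hteq]; simp
      simp only [Finset.mem_insert, Finset.mem_singleton] at hmem
      rcases hmem with h | h | h
      · exfalso; rw [h, hq1] at hp2; exact absurd hp2 (by decide)
      · exact Prod.ext h11 h
      · exfalso; rw [← hzz] at h; exact hpz2 h.symm
    · rw [if_pos hcp, if_neg hcq] at hfpq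
      have hzz : z p = z q := (Prod.ext_iff.mp hfpq).1
      rw [hzz] at hcp
      exact absurd hcp hcq
    · rw [if_neg hcp, if_pos hcq] at hfpq
      have hzz : z p = z q := (Prod.ext_iff.mp hfpq).1
      rw [← hzz] at hcq
      exact absurd hcq hcp
    · rw [if_neg hcp, if_neg hcq] at hfpq
      have hzz : z p = z q := (Prod.ext_iff.mp hfpq).1
      have h22 : p.2 = q.2 := (Prod.ext_iff.mp hfpq).2
      have hteq : ({p.1, p.2, z p} : Finset (Vk k)) = {q.1, q.2, z q} := by
        apply uniq2 p.2 (z p) hpa2 _ hpT (by simp) (by simp) _ hqT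
          (by rw [h22]; simp) (by rw [hzz]; simp)
      have hmem : p.1 ∈ ({q.1, q.2, z q} : Finset (Vk k)) := by
        rw [← hteq]; simp
      simp only [Finset.mem_insert, Finset.mem_singleton] at hmem
      rcases hmem with h | h | h
      · exact Prod.ext h h22
      · exfalso; rw [h, hq2] at hp1; exact absurd hp1 (by decide)
      · exfalso; rw [← hzz] at h; exact hpz1 h.symm
  have hle := Finset.card_le_card_of_injOn f hmaps hinj
  rw [hs, ht', card_s, card_t'] at hle
  nlinarith [hle]

theorem stmt_4 (k : ℕ) :
    Fintype.card (Fin 2 × Fin 2 × Fin (6 * k + 3)) = 24 * k + 12 ∧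
    (∀ v, (exG k).degree v = 18 * k + 8) ∧
    3 ∣ (exG k).edgeFinset.card ∧
    (∀ v, Even ((exG k).degree v)) ∧
    ¬ ∃ T, IsTriangleDecomp (exG k) T := by
  refine ⟨?_, degree_eq k, ?_, ?_, no_decomp k⟩
  · simp [Fintype.card_prod]; ring
  · have hsum := SimpleGraph.sum_degrees_eq_twice_card_edges (exG k)
    have hs : ∑ v, (exG k).degree v = (24 * k + 12) * (18 * k + 8) := by
      rw [Finset.sum_congr rfl (fun v _ => degree_eq k v), Finset.sum_const, smul_eq_mul,
        Finset.card_univ]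
      simp [Fintype.card_prod]
      ring
    rw [hs] at hsum
    refine ⟨(4 * k + 2) * (18 * k + 8), ?_⟩
    have h2 : (24 * k + 12) * (18 * k + 8) = 2 * (3 * ((4 * k + 2) * (18 * k + 8))) := by ring
    rw [h2] at hsum
    omega
  · intro v
    rw [degree_eq k v]
    exact ⟨9 * k + 4, by ring⟩
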